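/- Let 2 ≤ k ≤ n − 1, let A > 0 and 0 < m ≤ M, and set c_0 = 1/(2(k+2)² − 1). Then there exist constants Λ > 0 and C > 0, depending only on n, k, A, m, M, such that for every λ = (λ_1, …, λ_n) ∈ Γ_k with λ_1 ≥ … ≥ λ_n, λ_n > −A, m ≤ σ_k(λ) ≤ M, λ_1 ≥ Λ, and σ_k(λ|1) < −c_0·σ_k(λ), one has λ_k ≤ C·|λ_n|. -/

import Mathlib

noncomputable def esymm (n m : ℕ) (lam : Fin n → ℝ) : ℝ :=
  ∑ s ∈ (Finset.univ : Finset (Fin n)).powersetCard m, ∏ i ∈ s, lam i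

def GardingCone (n k : ℕ) : Set (Fin n → ℝ) :=
  {lam | ∀ j, 1 ≤ j → j ≤ k → 0 < esymm n j lam}

/-- `σ_m(λ | S)`: the `m`-th elementary symmetric polynomial of the vector
obtained from `λ` by deleting the entries with indices in `S`. -/
noncomputable def esymmR (n m : ℕ) (lam : Fin n → ℝ) (S : Finset (Fin n)) : ℝ :=
  ∑ s ∈ (Finset.univ \ S).powersetCard m, ∏ i ∈ s, lam i

lemma aux1 {n m : ℕ} (hmn : m < n) (f : Fin n → ℝ)
    (hf : ∀ i j : Fin n, i ≤ j → f j ≤ f i) (h0 : ∀ i, 0 ≤ f i)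
    (t : Finset (Fin n)) (ht : t.card = m) (ht0 : ∀ i ∈ t, 0 < i.val) :
    ∏ i ∈ t, f i ≤ ∏ j : Fin m, f ⟨j.val + 1, Nat.lt_of_le_of_lt (Nat.succ_le_of_lt j.isLt) hmn⟩ := by
  classical
  set emb := t.orderEmbOfFin ht with hemb
  have himg : Finset.image (fun j => emb j) Finset.univ = t := by
    apply Finset.coe_injective
    rw [Finset.coe_image, Finset.coe_univ, Set.image_univ]
    exact Finset.range_orderEmbOfFin t ht
  have key : ∀ r : ℕ, ∀ hr : r < m, r + 1 ≤ (emb ⟨r, hr⟩).val := by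
    intro r
    induction r with
    | zero => intro hr; exact ht0 _ (t.orderEmbOfFin_mem ht _)
    | succ p ih =>
      intro hr
      have h1 : p < m := Nat.lt_of_succ_lt hr
      have h2 : (emb ⟨p, h1⟩) < emb ⟨p + 1, hr⟩ :=
        emb.strictMono (Fin.mk_lt_mk.2 (Nat.lt_succ_self p))
      have h3 := ih h1
      have h4 : (emb ⟨p, h1⟩).val < (emb ⟨p + 1, hr⟩).val := Fin.lt_def.mp h2
      omega
  rw [← himg, Finset.prod_image (fun a _ b _ h => emb.injective h)]
  apply Finset.prod_le_prod (fun j _ => h0 _)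
  intro j _
  exact hf _ _ (key j.val j.isLt)

lemma split0 (n k : ℕ) (lam : Fin n → ℝ) (i0 : Fin n) :
    esymm n (k + 1) lam
      = lam i0 * esymmR n k lam {i0} + esymmR n (k + 1) lam {i0} := by
  classical
  have h0 : i0 ∉ Finset.univ \ ({i0} : Finset (Fin n)) := by simp
  have huniv : (Finset.univ : Finset (Fin n)) = insert i0 (Finset.univ \ {i0}) := by
    ext x; by_cases hx : x = i0 <;> simp [hx]
  unfold esymm esymmR
  rw [huniv, Finset.powersetCard_succ_insert h0]
  rw [Finset.sum_union ?disj]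
  case disj =>
    rw [Finset.disjoint_left]
    intro s hs hs'
    simp only [Finset.mem_powersetCard, Finset.mem_image] at hs hs'
    obtain ⟨t, ht, rfl⟩ := hs'
    have h1 : i0 ∈ insert i0 t := Finset.mem_insert_self _ _
    have := hs.1 h1
    simp at this
  rw [Finset.sum_image ?inj]
  case inj =>
    intro s hs t ht hst
    simp only [Finset.mem_coe, Finset.mem_powersetCard] at hs ht
    have hi0s : i0 ∉ s := fun h => by simpa using hs.1 h
    have hi0t : i0 ∉ t := fun h => by simpa using ht.1 h
    have h2 := congrArg (fun u => Finset.erase u i0) hst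
    simpa [Finset.erase_insert, hi0s, hi0t] using h2
  have hins : ∀ s ∈ Finset.powersetCard k (Finset.univ \ {i0}),
      ∏ i ∈ insert i0 s, lam i = lam i0 * ∏ i ∈ s, lam i := by
    intro s hs
    simp only [Finset.mem_powersetCard] at hs
    exact Finset.prod_insert (fun h => by simpa using hs.1 h)
  rw [Finset.sum_congr rfl hins, ← Finset.mul_sum, ← huniv]
  rw [Nat.succ_eq_add_one]
  ring

set_option maxHeartbeats 2000000 in
/-- **Claim 1 in the proof of Lemma 1.8.** For `2 ≤ k ≤ n - 1`,
`A > 0`, `0 < m ≤ M` and `c₀ = 1/(2(k+2)² - 1)`, there are `Λ > 0` and `C > 0`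
(depending only on `n, k, A, m, M`) such that every decreasing `λ ∈ Γ_k` with
`λ_n > -A`, `m ≤ σ_k(λ) ≤ M`, `λ_1 ≥ Λ` and `σ_k(λ|1) < -c₀·σ_k(λ)` satisfies
`λ_k ≤ C·|λ_n|`. (Indices are 0-based.) -/
theorem stmt11 (n k : ℕ) (hk : 2 ≤ k) (hkn : k + 1 ≤ n)
    (A m M : ℝ) (hA : 0 < A) (hm : 0 < m) (hmM : m ≤ M) :
    ∃ Λ : ℝ, 0 < Λ ∧ ∃ C : ℝ, 0 < C ∧
      ∀ lam : Fin n → ℝ,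
        lam ∈ GardingCone n k →
        (∀ i j : Fin n, i ≤ j → lam j ≤ lam i) →
        -A < lam ⟨n - 1, by omega⟩ →
        m ≤ esymm n k lam → esymm n k lam ≤ M →
        Λ ≤ lam ⟨0, by omega⟩ →
        esymmR n k lam {(⟨0, by omega⟩ : Fin n)}
          < -(1 / (2 * ((k : ℝ) + 2) ^ 2 - 1)) * esymm n k lam →
        lam ⟨k - 1, by omega⟩ ≤ C * |lam ⟨n - 1, by omega⟩| := by
  classical
  obtain ⟨k', rfl⟩ : ∃ k', k = k' + 2 := ⟨k - 2, by omega⟩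
  have hM : 0 < M := lt_of_lt_of_le hm hmM
  set c₀ : ℝ := 1 / (2 * (((k' + 2 : ℕ) : ℝ) + 2) ^ 2 - 1) with hc₀def
  have hc₀ : 0 < c₀ := by
    rw [hc₀def]
    apply one_div_pos.2
    have : (0:ℝ) ≤ ((k' + 2 : ℕ) : ℝ) := Nat.cast_nonneg _
    nlinarith
  set Nk : ℝ := (((n - 1).choose (k' + 2) : ℕ) : ℝ) with hNkdef
  set Nk' : ℝ := (((n - 1).choose (k' + 1) : ℕ) : ℝ) with hNk'def
  have hNkpos : 0 < Nk := by
    rw [hNkdef]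
    exact_mod_cast Nat.choose_pos (by omega : k' + 2 ≤ n - 1)
  have hNk'0 : (0:ℝ) ≤ Nk' := by rw [hNk'def]; positivity
  set W : ℝ := 4 * Nk * A * M / (c₀ * m) with hWdef
  have hW : 0 < W := by
    rw [hWdef]
    exact div_pos (mul_pos (mul_pos (mul_pos (by norm_num) hNkpos) hA) hM) (mul_pos hc₀ hm)
  set Λ : ℝ := 2 * Nk * A + 2 * W with hΛdef
  have hΛpos : 0 < Λ := by
    rw [hΛdef]
    exact add_pos (mul_pos (mul_pos (by norm_num) hNkpos) hA) (mul_pos (by norm_num) hW)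
  set C : ℝ := 2 * (Nk' + 1) with hCdef
  have hCpos : 0 < C := by rw [hCdef]; nlinarith [hNk'0]
  have hC1 : 1 ≤ C := by rw [hCdef]; linarith
  refine ⟨Λ, hΛpos, C, hCpos, ?_⟩
  intro lam _hGC hdec hlamN hmlow hMup hlam0 hneg
  set i0 : Fin n := ⟨0, by omega⟩ with hi0def
  set iN : Fin n := ⟨n - 1, by omega⟩ with hiNdef
  set iK : Fin n := ⟨k' + 1, by omega⟩ with hiKdef
  have hsplit : esymm n (k' + 2) lam
      = lam i0 * esymmR n (k' + 1) lam {i0} + esymmR n (k' + 2) lam {i0} :=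
    split0 n (k' + 1) lam i0
  have hneg' : esymmR n (k' + 2) lam {i0} < -c₀ * esymm n (k' + 2) lam := hneg
  have hσm : m ≤ esymm n (k' + 2) lam := hmlow
  have hc₀σ : 0 < c₀ * esymm n (k' + 2) lam := mul_pos hc₀ (lt_of_lt_of_le hm hσm)
  have hle_iN : ∀ i : Fin n, lam iN ≤ lam i := by
    intro i
    apply hdec i iN
    have := i.isLt
    rw [Fin.le_def]
    simp only [hiNdef]
    omega
  -- λ_n < 0
  have hlamNneg : lam iN < 0 := by
    by_contra h
    push_neg at h
    have hall : (0:ℝ) ≤ esymmR n (k' + 2) lam {i0} := by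
      apply Finset.sum_nonneg
      intro s _
      exact Finset.prod_nonneg fun i _ => le_trans h (hle_iN i)
    linarith
  by_contra hcon
  push_neg at hcon
  have hcon' : C * |lam iN| < lam iK := hcon
  rw [abs_of_neg hlamNneg] at hcon'
  set δ : ℝ := -lam iN with hδdef
  have hδ : 0 < δ := by rw [hδdef]; linarith
  have hδA : δ < A := by rw [hδdef]; linarith
  have hK : C * δ < lam iK := hcon'
  have hKpos : 0 < lam iK := lt_of_le_of_lt (mul_nonneg hCpos.le hδ.le) hK
  have hδK : δ ≤ lam iK := by
    have h1 : δ ≤ C * δ := le_mul_of_one_le_left hδ.le hC1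
    linarith
  set f : Fin n → ℝ := fun i => max (lam i) δ with hfdef
  have hf0 : ∀ i, 0 ≤ f i := fun i => le_trans hδ.le (le_max_right _ _)
  have hfmono : ∀ i j : Fin n, i ≤ j → f j ≤ f i :=
    fun i j hij => max_le_max (hdec i j hij) le_rfl
  have hflam : ∀ i, |lam i| ≤ f i := by
    intro i
    rcases le_or_gt 0 (lam i) with h | h
    · rw [abs_of_nonneg h]; exact le_max_left _ _
    · rw [abs_of_neg h]
      refine le_trans ?_ (le_max_right _ _)
      have := hle_iN i
      rw [hδdef]
      linarith
  -- the general term bound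
  have boundGen : ∀ (l : ℕ) (hl : l < n) (s : Finset (Fin n)),
      s ⊆ Finset.univ \ {i0} → s.card = l + 1 →
      -(δ * ∏ j : Fin l, f ⟨j.val + 1, Nat.lt_of_le_of_lt (Nat.succ_le_of_lt j.isLt) hl⟩)
        ≤ ∏ i ∈ s, lam i := by
    intro l hl s hsub hcard
    have hPnn : (0:ℝ) ≤ ∏ j : Fin l, f ⟨j.val + 1, Nat.lt_of_le_of_lt (Nat.succ_le_of_lt j.isLt) hl⟩ :=
      Finset.prod_nonneg fun j _ => hf0 _
    by_cases hall : ∀ i ∈ s, 0 ≤ lam i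
    · have h1 : (0:ℝ) ≤ ∏ i ∈ s, lam i := Finset.prod_nonneg hall
      have h2 := mul_nonneg hδ.le hPnn
      linarith
    · push_neg at hall
      obtain ⟨a, has, ha⟩ := hall
      have habs : |lam a| ≤ δ := by
        rw [abs_of_neg ha, hδdef]
        have := hle_iN a
        linarith
      have hmain : -(∏ i ∈ s, lam i)
          ≤ δ * ∏ j : Fin l, f ⟨j.val + 1, Nat.lt_of_le_of_lt (Nat.succ_le_of_lt j.isLt) hl⟩ := by
        calc -(∏ i ∈ s, lam i) ≤ |∏ i ∈ s, lam i| := neg_le_abs _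
          _ = ∏ i ∈ s, |lam i| := Finset.abs_prod _ _
          _ = |lam a| * ∏ i ∈ s.erase a, |lam i| := (Finset.mul_prod_erase s _ has).symm
          _ ≤ δ * ∏ j : Fin l, f ⟨j.val + 1, Nat.lt_of_le_of_lt (Nat.succ_le_of_lt j.isLt) hl⟩ := by
              apply mul_le_mul habs ?_ (Finset.prod_nonneg fun i _ => abs_nonneg _) hδ.le
              calc ∏ i ∈ s.erase a, |lam i|
                  ≤ ∏ i ∈ s.erase a, f i :=
                    Finset.prod_le_prod (fun i _ => abs_nonneg _) (fun i _ => hflam i)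
                _ ≤ _ := by
                    apply aux1 hl f hfmono hf0 (s.erase a)
                    · rw [Finset.card_erase_of_mem has, hcard]
                      omega
                    · intro i hi
                      have hi' := hsub (Finset.mem_of_mem_erase hi)
                      simp only [Finset.mem_sdiff, Finset.mem_singleton] at hi'
                      have hne : i.val ≠ 0 := by
                        intro hv
                        exact hi'.2 (Fin.ext (by rw [hv]))
                      omega
      linarith
  have hlA : k' + 1 < n := by omega
  have hlB : k' < n := by omega
  set e : Fin (k' + 1) → Fin n :=
    fun j => ⟨j.val + 1, Nat.lt_of_le_of_lt (Nat.succ_le_of_lt j.isLt) hlA⟩ with hedef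
  set e2 : Fin k' → Fin n :=
    fun j => ⟨j.val + 1, Nat.lt_of_le_of_lt (Nat.succ_le_of_lt j.isLt) hlB⟩ with he2def
  have he_le : ∀ j : Fin (k' + 1), e j ≤ iK := by
    intro j
    rw [Fin.le_def]
    have := j.isLt
    simp only [hedef, hiKdef]
    omega
  have he2_le : ∀ j : Fin k', e2 j ≤ iK := by
    intro j
    rw [Fin.le_def]
    have := j.isLt
    simp only [he2def, hiKdef]
    omega
  have hfe : ∀ j : Fin (k' + 1), f (e j) = lam (e j) := by
    intro j
    apply max_eq_left
    exact le_trans hδK (hdec (e j) iK (he_le j))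
  have hfe2 : ∀ j : Fin k', f (e2 j) = lam (e2 j) := by
    intro j
    apply max_eq_left
    exact le_trans hδK (hdec (e2 j) iK (he2_le j))
  set G : ℝ := ∏ j : Fin (k' + 1), lam (e j) with hGdef
  set PB : ℝ := ∏ j : Fin k', f (e2 j) with hPBdef
  have hGpos : 0 < G := by
    rw [hGdef]
    exact Finset.prod_pos fun j _ => lt_of_lt_of_le hKpos (hdec (e j) iK (he_le j))
  have hPB0 : (0:ℝ) ≤ PB := by
    rw [hPBdef]; exact Finset.prod_nonneg fun j _ => hf0 _
  have hGsplit : G = PB * lam iK := by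
    rw [hGdef, Fin.prod_univ_castSucc]
    have h1 : ∀ j : Fin k', lam (e j.castSucc) = f (e2 j) := by
      intro j
      rw [hfe2 j]
      congr 1
    have h2 : lam (e (Fin.last k')) = lam iK := by congr 1
    rw [Finset.prod_congr rfl fun j _ => h1 j, h2, hPBdef]
  -- lower bound for esymmR k
  have hcard1 : (Finset.univ \ {i0} : Finset (Fin n)).card = n - 1 := by
    rw [Finset.card_sdiff_of_subset (by simp)]
    simp
  have hPAG : (∏ j : Fin (k' + 1),
      f ⟨j.val + 1, Nat.lt_of_le_of_lt (Nat.succ_le_of_lt j.isLt) hlA⟩) = G := by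
    rw [hGdef]
    exact Finset.prod_congr rfl fun j _ => hfe j
  have hσ''ge : -(Nk * (δ * G)) ≤ esymmR n (k' + 2) lam {i0} := by
    have h1 : ∀ s ∈ Finset.powersetCard (k' + 2) (Finset.univ \ ({i0} : Finset (Fin n))),
        -(δ * G) ≤ ∏ i ∈ s, lam i := by
      intro s hs
      rw [Finset.mem_powersetCard] at hs
      have := boundGen (k' + 1) hlA s hs.1 hs.2
      rw [hPAG] at this
      exact this
    have h2 : ∑ s ∈ Finset.powersetCard (k' + 2) (Finset.univ \ ({i0} : Finset (Fin n))),
        (-(δ * G)) ≤ esymmR n (k' + 2) lam {i0} := Finset.sum_le_sum h1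
    rw [Finset.sum_const, Finset.card_powersetCard, hcard1, nsmul_eq_mul] at h2
    rw [← hNkdef] at h2
    linarith
  -- lower bound for esymmR (k-1)
  set s₀ : Finset (Fin n) := Finset.image e Finset.univ with hs₀def
  have he_inj : Function.Injective e := by
    intro a b h
    have := congrArg Fin.val h
    simp only [hedef] at this
    exact Fin.ext (by omega)
  have hs₀card : s₀.card = k' + 1 := by
    rw [hs₀def, Finset.card_image_of_injective _ he_inj, Finset.card_univ, Fintype.card_fin]
  have hs₀sub : s₀ ⊆ Finset.univ \ {i0} := by
    intro i hi
    rw [hs₀def, Finset.mem_image] at hi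
    obtain ⟨j, _, rfl⟩ := hi
    simp only [Finset.mem_sdiff, Finset.mem_singleton]
    refine ⟨Finset.mem_univ _, ?_⟩
    intro h
    have := congrArg Fin.val h
    simp only [hedef, hi0def] at this
    omega
  have hs₀mem : s₀ ∈ Finset.powersetCard (k' + 1) (Finset.univ \ ({i0} : Finset (Fin n))) :=
    Finset.mem_powersetCard.2 ⟨hs₀sub, hs₀card⟩
  have hprod_s₀ : ∏ i ∈ s₀, lam i = G := by
    rw [hs₀def, Finset.prod_image fun a _ b _ h => he_inj h, hGdef]
  have hσ'ge : G / 2 ≤ esymmR n (k' + 1) lam {i0} := by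
    have hsum' : esymmR n (k' + 1) lam {i0}
        = ∏ i ∈ s₀, lam i
          + ∑ s ∈ (Finset.powersetCard (k' + 1)
              (Finset.univ \ ({i0} : Finset (Fin n)))).erase s₀, ∏ i ∈ s, lam i :=
      (Finset.add_sum_erase _ _ hs₀mem).symm
    have hB2 : ∀ s ∈ (Finset.powersetCard (k' + 1)
        (Finset.univ \ ({i0} : Finset (Fin n)))).erase s₀,
        -(δ * PB) ≤ ∏ i ∈ s, lam i := by
      intro s hs
      have hs' := Finset.mem_of_mem_erase hs
      rw [Finset.mem_powersetCard] at hs'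
      have := boundGen k' hlB s hs'.1 hs'.2
      rw [← hPBdef] at this
      exact this
    have h3 := Finset.sum_le_sum hB2
    rw [Finset.sum_const, nsmul_eq_mul] at h3
    have hcle : ((Finset.powersetCard (k' + 1)
        (Finset.univ \ ({i0} : Finset (Fin n)))).erase s₀).card ≤ (n - 1).choose (k' + 1) := by
      calc _ ≤ (Finset.powersetCard (k' + 1)
          (Finset.univ \ ({i0} : Finset (Fin n)))).card := Finset.card_erase_le
        _ = (n - 1).choose (k' + 1) := by rw [Finset.card_powersetCard, hcard1]
    have hmono : Nk' * (-(δ * PB)) ≤ (((Finset.powersetCard (k' + 1)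
        (Finset.univ \ ({i0} : Finset (Fin n)))).erase s₀).card : ℝ) * (-(δ * PB)) := by
      apply mul_le_mul_of_nonpos_right _ (neg_nonpos.2 (mul_nonneg hδ.le hPB0))
      rw [hNk'def]
      exact_mod_cast hcle
    have hkey : 2 * Nk' * (δ * PB) ≤ G := by
      have hx : PB * (C * δ) ≤ PB * lam iK := mul_le_mul_of_nonneg_left hK.le hPB0
      rw [hCdef] at hx
      have hy : (0:ℝ) ≤ δ * PB := mul_nonneg hδ.le hPB0
      linarith [hx, hy, hGsplit]
    rw [hsum', hprod_s₀]
    linarith [h3, hmono, hkey]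
  -- final contradiction
  have hlami0 : Λ ≤ lam i0 := hlam0
  have hlami0pos : 0 < lam i0 := lt_of_lt_of_le hΛpos hlami0
  have hup : lam i0 * esymmR n (k' + 1) lam {i0} ≤ M + Nk * (δ * G) := by
    have : lam i0 * esymmR n (k' + 1) lam {i0}
        = esymm n (k' + 2) lam - esymmR n (k' + 2) lam {i0} := by linarith [hsplit]
    rw [this]
    linarith [hσ''ge, hMup]
  have hΛG : Λ * (G / 2) ≤ lam i0 * esymmR n (k' + 1) lam {i0} := by
    calc Λ * (G / 2) ≤ lam i0 * (G / 2) :=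
          mul_le_mul_of_nonneg_right hlami0 (by linarith [hGpos])
      _ ≤ lam i0 * esymmR n (k' + 1) lam {i0} :=
          mul_le_mul_of_nonneg_left hσ'ge hlami0pos.le
  have hWG : W * G ≤ M := by
    have hδAG : Nk * (δ * G) ≤ Nk * (A * G) := by
      apply mul_le_mul_of_nonneg_left _ hNkpos.le
      exact mul_le_mul_of_nonneg_right hδA.le hGpos.le
    have h5 : Λ * (G / 2) ≤ M + Nk * (A * G) := le_trans hΛG (le_trans hup (by linarith))
    rw [hΛdef] at h5
    linarith [h5]
  have hGle : G ≤ M / W := (le_div_iff₀ hW).2 (by linarith)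
  have hfinal1 : c₀ * m < Nk * (δ * G) := by
    have h6 : c₀ * esymm n (k' + 2) lam < Nk * (δ * G) := by linarith [hσ''ge, hneg']
    have h7 : c₀ * m ≤ c₀ * esymm n (k' + 2) lam := mul_le_mul_of_nonneg_left hσm hc₀.le
    linarith
  have hfinal2 : Nk * (δ * G) ≤ Nk * A * (M / W) := by
    calc Nk * (δ * G) ≤ Nk * (A * G) := by
          apply mul_le_mul_of_nonneg_left _ hNkpos.le
          exact mul_le_mul_of_nonneg_right hδA.le hGpos.le
      _ ≤ Nk * A * (M / W) := by
          have := mul_le_mul_of_nonneg_left hGle (mul_nonneg hNkpos.le hA.le)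
          linarith [this]
  have hkey2 : Nk * A * (M / W) = c₀ * m / 4 := by
    have hc₀ne : c₀ ≠ 0 := ne_of_gt hc₀
    have hmne : m ≠ 0 := ne_of_gt hm
    have hNkne : Nk ≠ 0 := ne_of_gt hNkpos
    have hAne : A ≠ 0 := ne_of_gt hA
    have hMne : M ≠ 0 := ne_of_gt hM
    rw [hWdef]
    field_simp
  have : c₀ * m < c₀ * m / 4 := by
    rw [← hkey2]
    exact lt_of_lt_of_le hfinal1 hfinal2
  linarith [mul_pos hc₀ hm]
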